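/- Let λ ∈ Z_+^n be weakly decreasing with λ_i = λ_{i+1} ⟹ λ_i = 0, having at least two zero entries, and let λ̊ ∈ Z_+^{n-2} be obtained from λ by removing two zero entries. Then the evaluation of the Schur P-function p_{λ,n} at x_{n-1} = t, x_n = -t equals the Schur P-function p_{λ̊,n-2} in the variables x_1,...,x_{n-2} (and in particular is independent of t). -/

import Mathlib

open Equiv Finset

theorem Equiv.Perm.inv_apply_self {α : Type*} (f : Equiv.Perm α) (x : α) : f⁻¹ (f x) = x :=
  f.symm_apply_apply x

theorem Equiv.Perm.apply_inv_self {α : Type*} (f : Equiv.Perm α) (x : α) : f (f⁻¹ x) = x :=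
  f.apply_symm_apply x


/-- Laurent polynomials in `n` variables over `ℚ`. -/
abbrev LP (n : ℕ) : Type := AddMonoidAlgebra ℚ (Fin n →₀ ℤ)

/-- Evaluation of a Laurent polynomial at a point with invertible coordinates. -/
noncomputable def lpEval {n : ℕ} (x : Fin n → ℚˣ) (f : LP n) : ℚ :=
  Finsupp.sum f.coeff fun d c => c * ∏ i, ((x i ^ (d i) : ℚˣ) : ℚ)

/-- `f` is symmetric (invariant under the `Sₙ`-action permuting the variables). -/
def IsSymmLP {n : ℕ} (f : LP n) : Prop :=
  ∀ (σ : Equiv.Perm (Fin n)) (x : Fin n → ℚˣ), lpEval (x ∘ σ) f = lpEval x f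

/-- The point obtained by substituting `x i = t`, `x j = -t`, others given by `y`. -/
def substPair {n : ℕ} (i j : Fin n) (t : ℚˣ) (y : Fin n → ℚˣ) : Fin n → ℚˣ :=
  fun k => if k = i then t else if k = j then -t else y k

/-- The variable `xᵢ` as a Laurent polynomial. -/
noncomputable def Xv {n : ℕ} (i : Fin n) : LP n :=
  AddMonoidAlgebra.single (Finsupp.single i (1 : ℤ)) (1 : ℚ)

/-- The point of (ℚˣ)ⁿ whose first n-2 coordinates are y and whose last two
coordinates are t and -t. -/
def embedPt {n : ℕ} (t : ℚˣ) (y : Fin (n - 2) → ℚˣ) : Fin n → ℚˣ :=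
  fun i => if h : (i : ℕ) < n - 2 then y ⟨i, h⟩ else if (i : ℕ) = n - 2 then t else -t

/-- The value at x of the defining rational expression of the Schur P-function
p_{λ,n} = Σ_{w ∈ Sₙ/S_λ} w( x^λ ∏_{i<j, λᵢ>λⱼ} (1+xᵢ⁻¹xⱼ)/(1-xᵢ⁻¹xⱼ) ).
Since the summand depends only on the coset w·S_λ, the sum over coset
representatives equals the sum over all of Sₙ divided by |S_λ|. -/
noncomputable def schurPVal (n : ℕ) (lam : Fin n → ℤ) (x : Fin n → ℚˣ) : ℚ :=
  ((Fintype.card {σ : Equiv.Perm (Fin n) // ∀ i, lam (σ i) = lam i} : ℚ))⁻¹ *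
  ∑ σ : Equiv.Perm (Fin n),
    (∏ i, ((x (σ i) ^ (lam i) : ℚˣ) : ℚ)) *
    ∏ p ∈ Finset.univ.filter
        (fun p : Fin n × Fin n => p.1 < p.2 ∧ lam p.2 < lam p.1),
      (1 + ((x (σ p.1) : ℚ))⁻¹ * (x (σ p.2) : ℚ)) /
      (1 - ((x (σ p.1) : ℚ))⁻¹ * (x (σ p.2) : ℚ))

namespace SchurAux

variable {N : ℕ}

def AA (N : ℕ) : Fin (N + 2) := ⟨N, by omega⟩
def BB (N : ℕ) : Fin (N + 2) := ⟨N + 1, by omega⟩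

lemma AA_ne_BB : AA N ≠ BB N := by simp [AA, BB, Fin.ext_iff]

def emb (N : ℕ) : Fin N ≃ {x : Fin (N + 2) // (x : ℕ) < N} where
  toFun i := ⟨Fin.castLE (by omega) i, i.isLt⟩
  invFun a := ⟨(a : Fin (N+2)).1, a.2⟩
  left_inv i := rfl
  right_inv a := rfl

def ext (σ : Equiv.Perm (Fin N)) : Equiv.Perm (Fin (N + 2)) :=
  σ.extendDomain (emb N)

lemma ext_lt (σ : Equiv.Perm (Fin N)) (x : Fin (N+2)) (h : (x : ℕ) < N) :
    ext σ x = Fin.castLE (by omega) (σ ⟨x, h⟩) := by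
  rw [ext, Equiv.Perm.extendDomain_apply_subtype (p := fun x : Fin (N+2) => (x : ℕ) < N) σ (emb N) h]
  rfl

lemma ext_ge (σ : Equiv.Perm (Fin N)) (x : Fin (N+2)) (h : ¬ (x : ℕ) < N) :
    ext σ x = x := by
  rw [ext, Equiv.Perm.extendDomain_apply_not_subtype (p := fun x : Fin (N+2) => (x : ℕ) < N) σ (emb N) h]

lemma ext_AA (σ : Equiv.Perm (Fin N)) : ext σ (AA N) = AA N :=
  ext_ge σ _ (by simp [AA])

lemma ext_BB (σ : Equiv.Perm (Fin N)) : ext σ (BB N) = BB N :=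
  ext_ge σ _ (by simp [BB])

lemma swap_cases {α : Type*} [DecidableEq α] (a b x : α) :
    Equiv.swap a b x = a ∨ Equiv.swap a b x = b ∨ Equiv.swap a b x = x := by
  rcases eq_or_ne x a with rfl | hxa
  · simp [Equiv.swap_apply_left]
  rcases eq_or_ne x b with rfl | hxb
  · simp [Equiv.swap_apply_right]
  · right; right; exact Equiv.swap_apply_of_ne_of_ne hxa hxb

def pp (p q : Fin (N + 2)) : Equiv.Perm (Fin (N + 2)) :=
  (Equiv.swap (Equiv.swap p (AA N) q) (BB N)) * Equiv.swap p (AA N)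

lemma pp_apply_p (p q : Fin (N+2)) (hpq : p ≠ q) : pp p q p = AA N := by
  have h1 : Equiv.swap p (AA N) p = AA N := Equiv.swap_apply_left _ _
  have h2 : Equiv.swap p (AA N) q ≠ AA N := by
    intro h
    exact hpq ((Equiv.swap p (AA N)).injective (by rw [h, h1])).symm
  have h3 : (AA N : Fin (N+2)) ≠ BB N := AA_ne_BB
  simp only [pp, Equiv.Perm.mul_apply, h1]
  exact Equiv.swap_apply_of_ne_of_ne (Ne.symm h2) h3

lemma pp_apply_q (p q : Fin (N+2)) : pp p q q = BB N := by
  simp only [pp, Equiv.Perm.mul_apply]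
  exact Equiv.swap_apply_left _ _

lemma pp_fix {m : ℕ} (hm : m ≤ N) (p q : Fin (N+2)) (hp : m ≤ (p:ℕ)) (hq : m ≤ (q:ℕ))
    (x : Fin (N+2)) (hx : (x : ℕ) < m) : pp p q x = x := by
  have hAA : m ≤ ((AA N : Fin (N+2)) : ℕ) := by simp [AA]; omega
  have hBB : m ≤ ((BB N : Fin (N+2)) : ℕ) := by simp [BB]; omega
  have h1 : Equiv.swap p (AA N) x = x := by
    apply Equiv.swap_apply_of_ne_of_ne
    · intro h; rw [h] at hx; omega
    · intro h; rw [h] at hx; simp [AA] at hx; omega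
  have hq' : m ≤ ((Equiv.swap p (AA N) q : Fin (N+2)) : ℕ) := by
    rcases swap_cases p (AA N) q with h | h | h <;> rw [h] <;> assumption
  simp only [pp, Equiv.Perm.mul_apply, h1]
  apply Equiv.swap_apply_of_ne_of_ne
  · intro h; rw [h] at hx; omega
  · intro h; rw [h] at hx; simp [BB] at hx; omega

lemma pp_ge {m : ℕ} (hm : m ≤ N) (p q : Fin (N+2)) (hp : m ≤ (p:ℕ)) (hq : m ≤ (q:ℕ))
    (x : Fin (N+2)) (hx : m ≤ (x : ℕ)) : m ≤ ((pp p q x : Fin (N+2)) : ℕ) := by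
  have hAA : m ≤ ((AA N : Fin (N+2)) : ℕ) := by simp [AA]; omega
  have hBB : m ≤ ((BB N : Fin (N+2)) : ℕ) := by simp [BB]; omega
  have hq' : m ≤ ((Equiv.swap p (AA N) q : Fin (N+2)) : ℕ) := by
    rcases swap_cases p (AA N) q with h | h | h <;> rw [h] <;> assumption
  have h1 : m ≤ ((Equiv.swap p (AA N) x : Fin (N+2)) : ℕ) := by
    rcases swap_cases p (AA N) x with h | h | h <;> rw [h] <;> assumption
  simp only [pp, Equiv.Perm.mul_apply]
  rcases swap_cases (Equiv.swap p (AA N) q) (BB N) (Equiv.swap p (AA N) x) with h | h | h <;>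
    rw [h] <;> assumption

lemma pp_lt (p q : Fin (N+2)) (hpq : p ≠ q) (x : Fin (N+2)) (hxp : x ≠ p) (hxq : x ≠ q) :
    ((pp p q x : Fin (N+2)) : ℕ) < N := by
  have h1 : pp p q x ≠ AA N := by
    rw [← pp_apply_p p q hpq]; exact fun h => hxp ((pp p q).injective h)
  have h2 : pp p q x ≠ BB N := by
    rw [← pp_apply_q p q]; exact fun h => hxq ((pp p q).injective h)
  have := (pp p q x).isLt
  rw [Fin.ne_iff_vne] at h1 h2
  simp [AA, BB] at h1 h2
  omega

lemma phi_inv_A (p q : Fin (N+2)) (hpq : p ≠ q) (σb : Equiv.Perm (Fin N)) :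
    (ext σb * pp p q)⁻¹ (AA N) = p := by
  have h : (ext σb * pp p q) p = AA N := by
    simp only [Equiv.Perm.mul_apply, pp_apply_p p q hpq, ext_AA]
  rw [← h, Equiv.Perm.inv_apply_self]

lemma phi_inv_B (p q : Fin (N+2)) (hpq : p ≠ q) (σb : Equiv.Perm (Fin N)) :
    (ext σb * pp p q)⁻¹ (BB N) = q := by
  have h : (ext σb * pp p q) q = BB N := by
    simp only [Equiv.Perm.mul_apply, pp_apply_q p q, ext_BB]
  rw [← h, Equiv.Perm.inv_apply_self]

lemma ext_castLE (σ : Equiv.Perm (Fin N)) (i : Fin N) :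
    ext σ (Fin.castLE (by omega) i) = Fin.castLE (by omega) (σ i) := by
  rw [ext_lt σ _ (by simpa using i.isLt)]
  congr 1

lemma ext_inj : Function.Injective (ext (N := N)) := by
  intro σ τ h
  ext i
  have := congrArg (fun f : Equiv.Perm (Fin (N+2)) => f (Fin.castLE (by omega) i)) h
  simp only [ext_castLE] at this
  simpa [Fin.ext_iff] using this

lemma decomp (σ : Equiv.Perm (Fin (N+2))) :
    ∃ σb : Equiv.Perm (Fin N), σ = ext σb * pp (σ⁻¹ (AA N)) (σ⁻¹ (BB N)) := by
  set p := σ⁻¹ (AA N) with hp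
  set q := σ⁻¹ (BB N) with hq
  have hpq : p ≠ q := fun h => AA_ne_BB (by
    have := congrArg σ h
    simpa [hp, hq, Equiv.Perm.apply_inv_self] using this)
  set τ := σ * (pp p q)⁻¹ with hτ
  have hτA : τ (AA N) = AA N := by
    have : (pp p q)⁻¹ (AA N) = p := by rw [← pp_apply_p p q hpq, Equiv.Perm.inv_apply_self]
    rw [hτ, Equiv.Perm.mul_apply, this, hp, Equiv.Perm.apply_inv_self]
  have hτB : τ (BB N) = BB N := by
    have : (pp p q)⁻¹ (BB N) = q := by rw [← pp_apply_q p q, Equiv.Perm.inv_apply_self]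
    rw [hτ, Equiv.Perm.mul_apply, this, hq, Equiv.Perm.apply_inv_self]
  have hval : ∀ v : Fin (N+2), ¬ ((v:ℕ) < N) → (v = AA N ∨ v = BB N) := by
    intro v hv
    have := v.isLt
    rcases Nat.lt_or_ge (v:ℕ) (N+1) with h | h
    · left; apply Fin.ext; simp [AA]; omega
    · right; apply Fin.ext; simp [BB]; omega
  have hτAinv : τ⁻¹ (AA N) = AA N := by
    have h := Equiv.Perm.inv_apply_self τ (AA N)
    rwa [hτA] at h
  have hτBinv : τ⁻¹ (BB N) = BB N := by
    have h := Equiv.Perm.inv_apply_self τ (BB N)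
    rwa [hτB] at h
  have hlt : ∀ v : Fin (N+2), ((v:ℕ) < N) ↔ (v ≠ AA N ∧ v ≠ BB N) := by
    intro v
    constructor
    · intro hv
      constructor <;> intro h <;> rw [h] at hv <;> simp [AA, BB] at hv
    · rintro ⟨h1, h2⟩
      by_contra hc
      rcases hval v hc with h | h <;> [exact h1 h; exact h2 h]
  have hP : ∀ v : Fin (N+2), ((v:ℕ) < N) ↔ ((τ v : Fin (N+2)) : ℕ) < N := by
    intro v
    rw [hlt v, hlt (τ v)]
    constructor
    · rintro ⟨h1, h2⟩
      refine ⟨fun h => h1 ?_, fun h => h2 ?_⟩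
      · have h' := congrArg (⇑τ⁻¹) h
        rwa [Equiv.Perm.inv_apply_self, hτAinv] at h'
      · have h' := congrArg (⇑τ⁻¹) h
        rwa [Equiv.Perm.inv_apply_self, hτBinv] at h'
    · rintro ⟨h1, h2⟩
      refine ⟨fun h => h1 ?_, fun h => h2 ?_⟩ <;> rw [h]
      · exact hτA
      · exact hτB
  refine ⟨(emb N).symm.permCongr (τ.subtypePerm (fun v => (hP v).symm)), ?_⟩
  have hx : ext ((emb N).symm.permCongr (τ.subtypePerm (fun v => (hP v).symm))) = τ := by
    ext v
    by_cases h : (v : ℕ) < N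
    · rw [ext_lt _ _ h]
      rfl
    · rw [ext_ge _ _ h]
      rcases hval _ h with hv | hv <;> rw [hv]
      · exact congrArg Fin.val hτA.symm
      · exact congrArg Fin.val hτB.symm
  rw [hx, hτ]
  group

lemma phi_inj (p q p' q' : Fin (N+2)) (hpq : p ≠ q) (hpq' : p' ≠ q')
    (σb σb' : Equiv.Perm (Fin N)) (h : ext σb * pp p q = ext σb' * pp p' q') :
    p = p' ∧ q = q' ∧ σb = σb' := by
  have h1 : p = p' := by
    rw [← phi_inv_A p q hpq σb, ← phi_inv_A p' q' hpq' σb', h]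
  have h2 : q = q' := by
    rw [← phi_inv_B p q hpq σb, ← phi_inv_B p' q' hpq' σb', h]
  refine ⟨h1, h2, ?_⟩
  apply ext_inj
  rw [h1, h2] at h
  exact mul_right_cancel h

lemma phi_fix_iff {m : ℕ} (hm : m ≤ N) (p q : Fin (N+2)) (hp : m ≤ (p:ℕ)) (hq : m ≤ (q:ℕ))
    (σb : Equiv.Perm (Fin N)) :
    (∀ v : Fin (N+2), (v:ℕ) < m → (ext σb * pp p q) v = v) ↔
      (∀ i : Fin N, (i:ℕ) < m → σb i = i) := by
  constructor
  · intro h i hi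
    have hv := h (Fin.castLE (by omega) i) (by simpa using hi)
    rw [Equiv.Perm.mul_apply, pp_fix hm p q hp hq _ (by simpa using hi), ext_castLE] at hv
    exact Fin.ext (by simpa [Fin.ext_iff] using hv)
  · intro h v hv
    rw [Equiv.Perm.mul_apply, pp_fix hm p q hp hq v hv]
    have hvN : (v:ℕ) < N := by omega
    rw [ext_lt _ _ hvN, h ⟨v, hvN⟩ hv]
    exact Fin.ext rfl


section Main
variable {N m : ℕ}

lemma pair_one (u tq : ℚ) (hu0 : u ≠ 0) (h1 : u ≠ tq) (h2 : u ≠ -tq) :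
    (1 + u⁻¹ * tq) / (1 - u⁻¹ * tq) * ((1 + u⁻¹ * -tq) / (1 - u⁻¹ * -tq)) = 1 := by
  have hu1 : (1:ℚ) + u⁻¹ * tq ≠ 0 := by
    intro h
    apply h2
    have h' : u⁻¹ * tq = -1 := by linarith
    have h3 : u * (u⁻¹ * tq) = u * (-1) := by rw [h']
    rw [← mul_assoc, mul_inv_cancel₀ hu0, one_mul] at h3
    linarith
  have hu2 : (1:ℚ) - u⁻¹ * tq ≠ 0 := by
    intro h
    apply h1
    rw [sub_eq_zero] at h
    have h3 : u * (u⁻¹ * tq) = u * 1 := by rw [← h]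
    rw [← mul_assoc, mul_inv_cancel₀ hu0, one_mul, mul_one] at h3
    exact h3.symm
  have e1 : (1:ℚ) + u⁻¹ * -tq = 1 - u⁻¹ * tq := by ring
  have e2 : (1:ℚ) - u⁻¹ * -tq = 1 + u⁻¹ * tq := by ring
  rw [e1, e2, div_mul_div_comm, mul_comm ((1:ℚ) - u⁻¹ * tq) ((1:ℚ) + u⁻¹ * tq)]
  exact div_self (mul_ne_zero hu1 hu2)

lemma termB (hmN : m ≤ N) (lam : Fin (N+2) → ℤ) (lamr : Fin N → ℤ)
    (hlamr : ∀ i : Fin N, lamr i = lam (Fin.castLE (by omega) i))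
    (hlamz : ∀ i : Fin (N+2), ¬((i:ℕ) < m) → lam i = 0)
    (x : Fin (N+2) → ℚˣ) (y : Fin N → ℚˣ) (t : ℚˣ)
    (hxA : x (AA N) = t) (hxB : x (BB N) = -t)
    (hxy : ∀ (v : Fin (N+2)) (h : (v:ℕ) < N), x v = y ⟨(v:ℕ), h⟩)
    (hyt : ∀ k : Fin N, ((y k : ℚ) ≠ (t:ℚ)) ∧ ((y k:ℚ) ≠ -((t : ℚˣ):ℚ)))
    (p q : Fin (N+2)) (hp : m ≤ (p:ℕ)) (hq : m ≤ (q:ℕ)) (hpq : p ≠ q)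
    (σb : Equiv.Perm (Fin N)) :
    (∏ i, ((y (σb i) ^ (lamr i) : ℚˣ) : ℚ)) *
      ∏ pr ∈ Finset.univ.filter (fun pr : Fin N × Fin N => pr.1 < pr.2 ∧ (pr.1:ℕ) < m),
        (1 + ((y (σb pr.1) : ℚ))⁻¹ * (y (σb pr.2) : ℚ)) /
        (1 - ((y (σb pr.1) : ℚ))⁻¹ * (y (σb pr.2) : ℚ))
    = (∏ i, ((x ((ext σb * pp p q) i) ^ (lam i) : ℚˣ) : ℚ)) *
      ∏ pr ∈ Finset.univ.filter (fun pr : Fin (N+2) × Fin (N+2) => pr.1 < pr.2 ∧ (pr.1:ℕ) < m),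
        (1 + ((x ((ext σb * pp p q) pr.1) : ℚ))⁻¹ * (x ((ext σb * pp p q) pr.2) : ℚ)) /
        (1 - ((x ((ext σb * pp p q) pr.1) : ℚ))⁻¹ * (x ((ext σb * pp p q) pr.2) : ℚ)) := by
  classical
  have hσv : ∀ (v : Fin (N+2)) (w : Fin N), pp p q v = Fin.castLE (by omega) w →
      x ((ext σb * pp p q) v) = y (σb w) := by
    intro v w hw
    rw [Equiv.Perm.mul_apply, hw, ext_castLE]
    have hlt : ((Fin.castLE (by omega : N ≤ N+2) (σb w) : Fin (N+2)) : ℕ) < N := (σb w).isLt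
    rw [hxy _ hlt]
    rfl
  have hlamv : ∀ (v : Fin (N+2)) (w : Fin N), pp p q v = Fin.castLE (by omega) w →
      lam v = lamr w := by
    intro v w hw
    rw [hlamr]
    by_cases hv : (v:ℕ) < m
    · rw [pp_fix hmN p q hp hq v hv] at hw
      rw [hw]
    · rw [hlamz v hv, hlamz]
      have h2 := pp_ge hmN p q hp hq v (not_lt.mp hv)
      rw [hw] at h2
      simpa using h2
  have hfixlt : ∀ (v : Fin (N+2)) (hv : (v:ℕ) < m),
      pp p q v = Fin.castLE (by omega) (⟨(v:ℕ), by omega⟩ : Fin N) := by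
    intro v hv
    rw [pp_fix hmN p q hp hq v hv]
    exact Fin.ext rfl
  have hppeq : ∀ (v : Fin (N+2)) (h1 : v ≠ p) (h2 : v ≠ q),
      pp p q v = Fin.castLE (by omega)
        (⟨((pp p q v : Fin (N+2)):ℕ), pp_lt p q hpq v h1 h2⟩ : Fin N) :=
    fun v h1 h2 => Fin.ext rfl
  have hinvne : ∀ w : Fin N,
      (pp p q)⁻¹ (Fin.castLE (by omega) w) ≠ p ∧ (pp p q)⁻¹ (Fin.castLE (by omega) w) ≠ q := by
    intro w
    constructor
    · intro h
      have h2 := congrArg (pp p q) h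
      rw [Equiv.Perm.apply_inv_self, pp_apply_p p q hpq] at h2
      have h3 := congrArg Fin.val h2
      have := w.isLt
      simp [AA] at h3
      omega
    · intro h
      have h2 := congrArg (pp p q) h
      rw [Equiv.Perm.apply_inv_self, pp_apply_q p q] at h2
      have h3 := congrArg Fin.val h2
      have := w.isLt
      simp [BB] at h3
      omega
  have hxpart : (∏ i, ((y (σb i) ^ (lamr i) : ℚˣ) : ℚ))
      = ∏ i, ((x ((ext σb * pp p q) i) ^ (lam i) : ℚˣ) : ℚ) := by
    rw [← Finset.prod_sdiff (Finset.subset_univ ({p, q} : Finset (Fin (N+2))))]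
    have hpair : (∏ i ∈ ({p, q} : Finset (Fin (N+2))),
        ((x ((ext σb * pp p q) i) ^ (lam i) : ℚˣ) : ℚ)) = 1 := by
      rw [Finset.prod_pair hpq, hlamz p (by omega), hlamz q (by omega)]
      simp
    rw [hpair, mul_one]
    refine Finset.prod_bij'
      (fun (i' : Fin N) (_ : i' ∈ Finset.univ) => (pp p q)⁻¹ (Fin.castLE (by omega) i'))
      (fun v hv => (⟨((pp p q v : Fin (N+2)):ℕ), pp_lt p q hpq v
        (by simp only [Finset.mem_sdiff, Finset.mem_univ, true_and, Finset.mem_insert,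
              Finset.mem_singleton] at hv; push_neg at hv; exact hv.1)
        (by simp only [Finset.mem_sdiff, Finset.mem_univ, true_and, Finset.mem_insert,
              Finset.mem_singleton] at hv; push_neg at hv; exact hv.2)⟩ : Fin N))
      ?_ ?_ ?_ ?_ ?_
    · intro i' _
      rw [Finset.mem_sdiff]
      refine ⟨Finset.mem_univ _, ?_⟩
      simp only [Finset.mem_insert, Finset.mem_singleton]
      push_neg
      exact hinvne i'
    · intro v hv
      exact Finset.mem_univ _
    · intro i' _
      simp [Fin.ext_iff, Equiv.Perm.apply_inv_self]
    · intro v hv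
      apply (pp p q).injective
      rw [Equiv.Perm.apply_inv_self]
      exact Fin.ext rfl
    · intro i' _
      have h1 := hσv ((pp p q)⁻¹ (Fin.castLE (by omega) i')) i' ((pp p q).apply_inv_self _)
      have h2 := hlamv ((pp p q)⁻¹ (Fin.castLE (by omega) i')) i' ((pp p q).apply_inv_self _)
      rw [h1, h2]
  have hcross : (∏ pr ∈ Finset.univ.filter (fun pr : Fin N × Fin N => pr.1 < pr.2 ∧ (pr.1:ℕ) < m),
        (1 + ((y (σb pr.1) : ℚ))⁻¹ * (y (σb pr.2) : ℚ)) /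
        (1 - ((y (σb pr.1) : ℚ))⁻¹ * (y (σb pr.2) : ℚ)))
      = ∏ pr ∈ Finset.univ.filter (fun pr : Fin (N+2) × Fin (N+2) => pr.1 < pr.2 ∧ (pr.1:ℕ) < m),
        (1 + ((x ((ext σb * pp p q) pr.1) : ℚ))⁻¹ * (x ((ext σb * pp p q) pr.2) : ℚ)) /
        (1 - ((x ((ext σb * pp p q) pr.1) : ℚ))⁻¹ * (x ((ext σb * pp p q) pr.2) : ℚ)) := by
    rw [← Finset.prod_filter_mul_prod_filter_not
      (Finset.univ.filter (fun pr : Fin (N+2) × Fin (N+2) => pr.1 < pr.2 ∧ (pr.1:ℕ) < m))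
      (fun pr => pr.2 = p ∨ pr.2 = q)]
    have hσp : x ((ext σb * pp p q) p) = t := by
      rw [Equiv.Perm.mul_apply, pp_apply_p p q hpq, ext_AA, hxA]
    have hσq : x ((ext σb * pp p q) q) = -t := by
      rw [Equiv.Perm.mul_apply, pp_apply_q p q, ext_BB, hxB]
    have hF2 : (Finset.univ.filter (fun pr : Fin (N+2) × Fin (N+2) => pr.1 < pr.2 ∧ (pr.1:ℕ) < m)).filter
          (fun pr => pr.2 = p ∨ pr.2 = q)
        = (Finset.univ.filter (fun i : Fin (N+2) => (i:ℕ) < m)) ×ˢ ({p, q} : Finset (Fin (N+2))) := by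
      ext pr
      simp only [Finset.mem_filter, Finset.mem_univ, true_and, Finset.mem_product,
        Finset.mem_insert, Finset.mem_singleton]
      constructor
      · rintro ⟨⟨h1, h2⟩, h3⟩; exact ⟨h2, h3⟩
      · rintro ⟨h1, h2⟩
        refine ⟨⟨?_, h1⟩, h2⟩
        rcases h2 with h | h <;> rw [h, Fin.lt_def] <;> omega
    have hone : ((Finset.univ.filter (fun pr : Fin (N+2) × Fin (N+2) => pr.1 < pr.2 ∧ (pr.1:ℕ) < m)).filter
          (fun pr => pr.2 = p ∨ pr.2 = q)).prod
        (fun pr => (1 + ((x ((ext σb * pp p q) pr.1) : ℚ))⁻¹ * (x ((ext σb * pp p q) pr.2) : ℚ)) /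
        (1 - ((x ((ext σb * pp p q) pr.1) : ℚ))⁻¹ * (x ((ext σb * pp p q) pr.2) : ℚ))) = 1 := by
      rw [hF2, Finset.prod_product]
      apply Finset.prod_eq_one
      intro i hi
      rw [Finset.mem_filter] at hi
      obtain ⟨-, hi2⟩ := hi
      have hip : i ≠ p := by intro h; rw [h] at hi2; omega
      have hiq : i ≠ q := by intro h; rw [h] at hi2; omega
      rw [Finset.prod_pair hpq]
      dsimp only
      rw [hσv i ⟨((pp p q i : Fin (N+2)):ℕ), pp_lt p q hpq i hip hiq⟩ (hppeq i hip hiq),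
        hσp, hσq, Units.val_neg]
      exact pair_one _ _ (Units.ne_zero _) (hyt _).1 (hyt _).2
    rw [hone, one_mul]
    refine Finset.prod_bij'
      (fun (pr : Fin N × Fin N) (_ : pr ∈ _) =>
        ((Fin.castLE (by omega : N ≤ N+2) pr.1), (pp p q)⁻¹ (Fin.castLE (by omega) pr.2)))
      (fun pr hpr =>
        ((⟨((pr.1 : Fin (N+2)):ℕ), by
            simp only [Finset.mem_filter, Finset.mem_univ, true_and] at hpr
            have := hpr.1.2
            omega⟩ : Fin N),
         (⟨((pp p q pr.2 : Fin (N+2)):ℕ), pp_lt p q hpq pr.2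
            (by simp only [Finset.mem_filter, Finset.mem_univ, true_and] at hpr
                push_neg at hpr; exact hpr.2.1)
            (by simp only [Finset.mem_filter, Finset.mem_univ, true_and] at hpr
                push_neg at hpr; exact hpr.2.2)⟩ : Fin N)))
      ?_ ?_ ?_ ?_ ?_
    · intro pr hpr
      simp only [Finset.mem_filter, Finset.mem_univ, true_and] at hpr
      obtain ⟨h1, h2⟩ := hpr
      have hw := hinvne pr.2
      simp only [Finset.mem_filter, Finset.mem_univ, true_and]
      refine ⟨⟨?_, by simpa using h2⟩, ?_⟩
      · rw [Fin.lt_def]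
        by_cases hcase : (((pp p q)⁻¹ (Fin.castLE (by omega : N ≤ N+2) pr.2) : Fin (N+2)) : ℕ) < m
        · have h5 := pp_fix hmN p q hp hq _ hcase
          rw [Equiv.Perm.apply_inv_self] at h5
          have h3 := congrArg Fin.val h5
          rw [Fin.lt_def] at h1
          simp only [Fin.coe_castLE] at h3 ⊢
          omega
        · simp only [Fin.coe_castLE]
          omega
      · push_neg
        exact hw
    · intro pr hpr
      simp only [Finset.mem_filter, Finset.mem_univ, true_and] at hpr
      obtain ⟨⟨h1, h2⟩, h3⟩ := hpr
      push_neg at h3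
      simp only [Finset.mem_filter, Finset.mem_univ, true_and]
      refine ⟨?_, by simpa using h2⟩
      rw [Fin.lt_def]
      by_cases hcase : ((pr.2 : Fin (N+2)) : ℕ) < m
      · have h5 := pp_fix hmN p q hp hq pr.2 hcase
        have h4 := congrArg Fin.val h5
        rw [Fin.lt_def] at h1
        simp only at h4 ⊢
        omega
      · have h5 := pp_ge hmN p q hp hq pr.2 (not_lt.mp hcase)
        rw [Fin.lt_def] at h1
        simp only
        omega
    · intro pr hpr
      dsimp only
      apply Prod.ext
      · exact Fin.ext rfl
      · simp [Fin.ext_iff, Equiv.Perm.apply_inv_self]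
    · intro pr hpr
      dsimp only
      apply Prod.ext
      · exact Fin.ext rfl
      · apply (pp p q).injective
        rw [Equiv.Perm.apply_inv_self]
        exact Fin.ext rfl
    · intro pr hpr
      simp only [Finset.mem_filter, Finset.mem_univ, true_and] at hpr
      obtain ⟨h1, h2⟩ := hpr
      dsimp only
      have hx1 : x ((ext σb * pp p q) (Fin.castLE (by omega) pr.1)) = y (σb pr.1) := by
        apply hσv
        have hlt : ((Fin.castLE (by omega : N ≤ N+2) pr.1 : Fin (N+2)) : ℕ) < m := by simpa using h2
        rw [pp_fix hmN p q hp hq _ hlt]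
      have hx2 : x ((ext σb * pp p q) ((pp p q)⁻¹ (Fin.castLE (by omega) pr.2))) = y (σb pr.2) := by
        apply hσv
        exact (pp p q).apply_inv_self _
      rw [hx1, hx2]
  rw [hxpart, hcross]

lemma sum_lemma (hmN : m ≤ N) (lam : Fin (N+2) → ℤ) (lamr : Fin N → ℤ)
    (hlamr : ∀ i : Fin N, lamr i = lam (Fin.castLE (by omega) i))
    (hlamz : ∀ i : Fin (N+2), ¬((i:ℕ) < m) → lam i = 0)
    (x : Fin (N+2) → ℚˣ) (y : Fin N → ℚˣ) (t : ℚˣ)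
    (hxA : x (AA N) = t) (hxB : x (BB N) = -t)
    (hxy : ∀ (v : Fin (N+2)) (h : (v:ℕ) < N), x v = y ⟨(v:ℕ), h⟩)
    (hyt : ∀ k : Fin N, ((y k : ℚ) ≠ (t:ℚ)) ∧ ((y k:ℚ) ≠ -((t : ℚˣ):ℚ))) :
    (∑ σ : Equiv.Perm (Fin (N+2)),
      (∏ i, ((x (σ i) ^ (lam i) : ℚˣ) : ℚ)) *
      ∏ pr ∈ Finset.univ.filter (fun pr : Fin (N+2) × Fin (N+2) => pr.1 < pr.2 ∧ (pr.1:ℕ) < m),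
        (1 + ((x (σ pr.1) : ℚ))⁻¹ * (x (σ pr.2) : ℚ)) /
        (1 - ((x (σ pr.1) : ℚ))⁻¹ * (x (σ pr.2) : ℚ)))
    = ((Finset.univ.filter (fun pq : Fin (N+2) × Fin (N+2) =>
          m ≤ (pq.1:ℕ) ∧ m ≤ (pq.2:ℕ) ∧ pq.1 ≠ pq.2)).card : ℚ) *
      ∑ σb : Equiv.Perm (Fin N),
        (∏ i, ((y (σb i) ^ (lamr i) : ℚˣ) : ℚ)) *
        ∏ pr ∈ Finset.univ.filter (fun pr : Fin N × Fin N => pr.1 < pr.2 ∧ (pr.1:ℕ) < m),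
          (1 + ((y (σb pr.1) : ℚ))⁻¹ * (y (σb pr.2) : ℚ)) /
          (1 - ((y (σb pr.1) : ℚ))⁻¹ * (y (σb pr.2) : ℚ)) := by
  classical
  set T : Equiv.Perm (Fin (N+2)) → ℚ := fun σ =>
    (∏ i, ((x (σ i) ^ (lam i) : ℚˣ) : ℚ)) *
      ∏ pr ∈ Finset.univ.filter (fun pr : Fin (N+2) × Fin (N+2) => pr.1 < pr.2 ∧ (pr.1:ℕ) < m),
        (1 + ((x (σ pr.1) : ℚ))⁻¹ * (x (σ pr.2) : ℚ)) /
        (1 - ((x (σ pr.1) : ℚ))⁻¹ * (x (σ pr.2) : ℚ)) with hT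
  set T' : Equiv.Perm (Fin N) → ℚ := fun σb =>
    (∏ i, ((y (σb i) ^ (lamr i) : ℚˣ) : ℚ)) *
      ∏ pr ∈ Finset.univ.filter (fun pr : Fin N × Fin N => pr.1 < pr.2 ∧ (pr.1:ℕ) < m),
        (1 + ((y (σb pr.1) : ℚ))⁻¹ * (y (σb pr.2) : ℚ)) /
        (1 - ((y (σb pr.1) : ℚ))⁻¹ * (y (σb pr.2) : ℚ)) with hT'
  rw [← Finset.sum_filter_add_sum_filter_not Finset.univ
    (fun σ : Equiv.Perm (Fin (N+2)) =>
      m ≤ ((σ⁻¹ (AA N) : Fin (N+2)):ℕ) ∧ m ≤ ((σ⁻¹ (BB N) : Fin (N+2)):ℕ)) T]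
  have hbad : (∑ σ ∈ Finset.univ.filter (fun σ : Equiv.Perm (Fin (N+2)) =>
      ¬(m ≤ ((σ⁻¹ (AA N) : Fin (N+2)):ℕ) ∧ m ≤ ((σ⁻¹ (BB N) : Fin (N+2)):ℕ))), T σ) = 0 := by
    apply Finset.sum_eq_zero
    intro σ hσ
    rw [Finset.mem_filter] at hσ
    obtain ⟨-, hσ⟩ := hσ
    rw [not_and_or, not_le, not_le] at hσ
    have hpq : σ⁻¹ (AA N) ≠ σ⁻¹ (BB N) := fun h => AA_ne_BB ((Equiv.injective σ⁻¹) h)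
    have hmin : (σ⁻¹ (AA N) < σ⁻¹ (BB N) ∧ ((σ⁻¹ (AA N) : Fin (N+2)):ℕ) < m) ∨
        (σ⁻¹ (BB N) < σ⁻¹ (AA N) ∧ ((σ⁻¹ (BB N) : Fin (N+2)):ℕ) < m) := by
      rcases lt_or_gt_of_ne hpq with h | h
      · left
        refine ⟨h, ?_⟩
        have hv := Fin.lt_def.mp h
        omega
      · right
        refine ⟨h, ?_⟩
        have hv := Fin.lt_def.mp h
        omega
    rw [hT]
    apply mul_eq_zero_of_right
    rcases hmin with ⟨hlt, hm'⟩ | ⟨hlt, hm'⟩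
    · apply Finset.prod_eq_zero (i := (σ⁻¹ (AA N), σ⁻¹ (BB N)))
      · rw [Finset.mem_filter]
        exact ⟨Finset.mem_univ _, hlt, hm'⟩
      · dsimp only
        rw [Equiv.Perm.apply_inv_self, Equiv.Perm.apply_inv_self, hxA, hxB, Units.val_neg]
        have hz : (1:ℚ) + ((t:ℚ))⁻¹ * (-(t:ℚ)) = 0 := by
          rw [mul_neg, inv_mul_cancel₀ (Units.ne_zero t)]
          ring
        rw [hz, zero_div]
    · apply Finset.prod_eq_zero (i := (σ⁻¹ (BB N), σ⁻¹ (AA N)))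
      · rw [Finset.mem_filter]
        exact ⟨Finset.mem_univ _, hlt, hm'⟩
      · dsimp only
        rw [Equiv.Perm.apply_inv_self, Equiv.Perm.apply_inv_self, hxA, hxB, Units.val_neg]
        have hz : (1:ℚ) + (-(t:ℚ))⁻¹ * ((t:ℚ)) = 0 := by
          rw [inv_neg, neg_mul, inv_mul_cancel₀ (Units.ne_zero t)]
          ring
        rw [hz, zero_div]
  rw [hbad, add_zero]
  have hstep : (∑ σ ∈ Finset.univ.filter (fun σ : Equiv.Perm (Fin (N+2)) =>
        m ≤ ((σ⁻¹ (AA N) : Fin (N+2)):ℕ) ∧ m ≤ ((σ⁻¹ (BB N) : Fin (N+2)):ℕ)), T σ)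
      = ∑ z ∈ (Finset.univ.filter (fun pq : Fin (N+2) × Fin (N+2) =>
          m ≤ (pq.1:ℕ) ∧ m ≤ (pq.2:ℕ) ∧ pq.1 ≠ pq.2)) ×ˢ
          (Finset.univ : Finset (Equiv.Perm (Fin N))), T' z.2 := by
    symm
    refine Finset.sum_bij (fun z _ => ext z.2 * pp z.1.1 z.1.2) ?_ ?_ ?_ ?_
    · rintro ⟨⟨p, q⟩, σb⟩ hz
      rw [Finset.mem_product, Finset.mem_filter] at hz
      obtain ⟨⟨-, hp, hq, hne⟩, -⟩ := hz
      rw [Finset.mem_filter]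
      refine ⟨Finset.mem_univ _, ?_, ?_⟩
      · rw [phi_inv_A p q hne σb]; exact hp
      · rw [phi_inv_B p q hne σb]; exact hq
    · rintro ⟨⟨p, q⟩, σb⟩ h1 ⟨⟨p', q'⟩, σb'⟩ h2 he
      rw [Finset.mem_product, Finset.mem_filter] at h1 h2
      obtain ⟨⟨-, hp, hq, hne⟩, -⟩ := h1
      obtain ⟨⟨-, hp', hq', hne'⟩, -⟩ := h2
      obtain ⟨e1, e2, e3⟩ := phi_inj p q p' q' hne hne' σb σb' he
      simp [e1, e2, e3]
    · intro σ hσ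
      rw [Finset.mem_filter] at hσ
      obtain ⟨-, hpm, hqm⟩ := hσ
      have hne : σ⁻¹ (AA N) ≠ σ⁻¹ (BB N) := fun h => AA_ne_BB ((Equiv.injective σ⁻¹) h)
      obtain ⟨σb, hde⟩ := decomp σ
      refine ⟨((σ⁻¹ (AA N), σ⁻¹ (BB N)), σb), ?_, hde.symm⟩
      rw [Finset.mem_product, Finset.mem_filter]
      exact ⟨⟨Finset.mem_univ _, hpm, hqm, hne⟩, Finset.mem_univ _⟩
    · rintro ⟨⟨p, q⟩, σb⟩ hz
      rw [Finset.mem_product, Finset.mem_filter] at hz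
      obtain ⟨⟨-, hp, hq, hne⟩, -⟩ := hz
      rw [hT, hT']
      exact termB hmN lam lamr hlamr hlamz x y t hxA hxB hxy hyt p q hp hq hne σb
  rw [hstep, Finset.sum_product]
  dsimp only
  rw [Finset.sum_const, nsmul_eq_mul]

lemma coeff_cancel (a b : ℕ) (ha : (a:ℚ) ≠ 0) (S : ℚ) :
    ((a * b : ℕ) : ℚ)⁻¹ * ((a:ℚ) * S) = ((b:ℚ))⁻¹ * S := by
  rcases eq_or_ne (b:ℚ) 0 with hb | hb
  · push_cast
    rw [hb]
    simp
  · push_cast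
    field_simp

theorem key_thm (N : ℕ) (lam : Fin (N+2) → ℤ) (lamr : Fin N → ℤ)
    (hlamr : ∀ i : Fin N, lamr i = lam (Fin.castLE (by omega) i))
    (hpos : ∀ i, 0 ≤ lam i)
    (hdec : ∀ i j : Fin (N+2), i ≤ j → lam j ≤ lam i)
    (hstrict : ∀ i j : Fin (N+2), i < j → lam i = lam j → lam i = 0)
    (hz1 : lam (AA N) = 0)
    (t : ℚˣ) (y : Fin N → ℚˣ)
    (hdist : ∀ i j : Fin (N+2), i ≠ j →
      ((embedPt (n := N+2) t y i : ℚ)) ≠ (embedPt (n := N+2) t y j : ℚ)) :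
    schurPVal (N+2) lam (embedPt (n := N+2) t y) = schurPVal N lamr y := by
  classical
  set m : ℕ := ((Finset.univ : Finset (Fin (N+2))).filter fun i => 0 < lam i).card with hmdef
  have hmchar : ∀ i : Fin (N+2), 0 < lam i ↔ (i : ℕ) < m := by
    intro i
    constructor
    · intro hi
      have hsub : Finset.Iic i ⊆ Finset.univ.filter fun j => 0 < lam j := by
        intro j hj
        rw [Finset.mem_Iic] at hj
        rw [Finset.mem_filter]
        exact ⟨Finset.mem_univ _, lt_of_lt_of_le hi (hdec j i hj)⟩
      have hc := Finset.card_le_card hsub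
      rw [Fin.card_Iic] at hc
      omega
    · intro hi
      by_contra hc
      have hlam0 : lam i = 0 := le_antisymm (not_lt.mp hc) (hpos i)
      have hsub : (Finset.univ.filter fun j => 0 < lam j) ⊆ Finset.Iio i := by
        intro j hj
        rw [Finset.mem_filter] at hj
        rw [Finset.mem_Iio]
        by_contra hc2
        have := hdec i j (not_lt.mp hc2)
        omega
      have hc2 := Finset.card_le_card hsub
      rw [Fin.card_Iio] at hc2
      omega
  have hmN : m ≤ N := by
    by_contra h
    have h2 := (hmchar (AA N)).mpr (by simp [AA]; omega)
    omega
  have hlamz : ∀ i : Fin (N+2), ¬ ((i:ℕ) < m) → lam i = 0 := by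
    intro i h
    exact le_antisymm (not_lt.mp fun hp => h ((hmchar i).mp hp)) (hpos i)
  have huniq : ∀ i j : Fin (N+2), lam i = lam j → 0 < lam i → i = j := by
    intro i j he hp
    rcases lt_trichotomy i j with h | h | h
    · have h2 := hstrict i j h he
      exact absurd h2 (by omega)
    · exact h
    · have h2 := hstrict j i h he.symm
      exact absurd h2 (by omega)
  have hmchar' : ∀ i : Fin N, 0 < lamr i ↔ (i:ℕ) < m := by
    intro i
    rw [hlamr i]
    exact hmchar _
  have hlamz' : ∀ i : Fin N, ¬((i:ℕ) < m) → lamr i = 0 := by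
    intro i h
    rw [hlamr i]
    exact hlamz _ (by simpa using h)
  have hstabn : ∀ σ : Equiv.Perm (Fin (N+2)),
      (∀ i, lam (σ i) = lam i) ↔ (∀ i : Fin (N+2), (i:ℕ) < m → σ i = i) := by
    intro σ
    constructor
    · intro h i hi
      exact huniq (σ i) i (h i) (by rw [h i]; exact (hmchar i).mpr hi)
    · intro h i
      by_cases hi : (i:ℕ) < m
      · rw [h i hi]
      · have h2 : ¬ (((σ i : Fin (N+2)):ℕ) < m) := by
          intro hc
          have h3 := σ.injective (h _ hc)
          rw [h3] at hc
          exact hi hc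
        rw [hlamz _ h2, hlamz _ hi]
  have hstabN : ∀ σ : Equiv.Perm (Fin N),
      (∀ i, lamr (σ i) = lamr i) ↔ (∀ i : Fin N, (i:ℕ) < m → σ i = i) := by
    intro σ
    constructor
    · intro h i hi
      have h4 := huniq (Fin.castLE (by omega) (σ i)) (Fin.castLE (by omega) i)
        (by rw [← hlamr, ← hlamr]; exact h i)
        (by rw [← hlamr, h i]; exact (hmchar' i).mpr hi)
      exact Fin.ext (by simpa [Fin.ext_iff] using h4)
    · intro h i
      by_cases hi : (i:ℕ) < m
      · rw [h i hi]
      · have h2 : ¬ (((σ i : Fin N):ℕ) < m) := by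
          intro hc
          have h3 := σ.injective (h _ hc)
          rw [h3] at hc
          exact hi hc
        rw [hlamz' _ h2, hlamz' _ hi]
  -- embedPt facts
  have hxA : embedPt (n := N+2) t y (AA N) = t := by
    simp [embedPt, AA]
  have hxB : embedPt (n := N+2) t y (BB N) = -t := by
    simp [embedPt, BB]
  have hxy : ∀ (v : Fin (N+2)) (h : (v:ℕ) < N), embedPt (n := N+2) t y v = y ⟨(v:ℕ), h⟩ := by
    intro v h
    simp [embedPt, h]
  have hyt : ∀ k : Fin N, ((y k : ℚ) ≠ (t:ℚ)) ∧ ((y k:ℚ) ≠ -((t : ℚˣ):ℚ)) := by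
    intro k
    have hk := k.isLt
    constructor
    · have h := hdist (Fin.castLE (by omega) k) (AA N)
        (by intro hc
            have h2 := congrArg Fin.val hc
            simp [AA] at h2
            omega)
      rw [hxy _ (by simpa using hk), hxA] at h
      exact h
    · have h := hdist (Fin.castLE (by omega) k) (BB N)
        (by intro hc
            have h2 := congrArg Fin.val hc
            simp [BB] at h2
            omega)
      rw [hxy _ (by simpa using hk), hxB, Units.val_neg] at h
      exact h
  -- filter rewrites
  have hFeq : (Finset.univ.filter
        (fun pr : Fin (N+2) × Fin (N+2) => pr.1 < pr.2 ∧ lam pr.2 < lam pr.1))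
      = Finset.univ.filter (fun pr => pr.1 < pr.2 ∧ (pr.1:ℕ) < m) := by
    apply Finset.filter_congr
    intro pr _
    constructor
    · rintro ⟨h1, h2⟩
      refine ⟨h1, (hmchar pr.1).mp ?_⟩
      have := hpos pr.2
      omega
    · rintro ⟨h1, h2⟩
      refine ⟨h1, ?_⟩
      have hle := hdec pr.1 pr.2 (le_of_lt h1)
      rcases lt_or_eq_of_le hle with h | h
      · exact h
      · have h3 := hstrict pr.1 pr.2 h1 h.symm
        have h4 := (hmchar pr.1).mpr h2
        omega
  have hFeq' : (Finset.univ.filter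
        (fun pr : Fin N × Fin N => pr.1 < pr.2 ∧ lamr pr.2 < lamr pr.1))
      = Finset.univ.filter (fun pr => pr.1 < pr.2 ∧ (pr.1:ℕ) < m) := by
    apply Finset.filter_congr
    intro pr _
    rw [hlamr pr.1, hlamr pr.2]
    have h1' : (Fin.castLE (by omega : N ≤ N+2) pr.1 < Fin.castLE (by omega) pr.2) ↔ pr.1 < pr.2 := by
      rw [Fin.lt_def, Fin.lt_def]
      simp
    constructor
    · rintro ⟨h1, h2⟩
      refine ⟨h1, ?_⟩
      have h3 := (hmchar (Fin.castLE (by omega) pr.1)).mp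
        (by have := hpos (Fin.castLE (by omega) pr.2); omega)
      simpa using h3
    · rintro ⟨h1, h2⟩
      refine ⟨h1, ?_⟩
      have hle := hdec (Fin.castLE (by omega) pr.1) (Fin.castLE (by omega) pr.2)
        (le_of_lt (h1'.mpr h1))
      rcases lt_or_eq_of_le hle with h | h
      · exact h
      · have h4 := hstrict _ _ (h1'.mpr h1) h.symm
        have h5 := (hmchar (Fin.castLE (by omega) pr.1)).mpr (by simpa using h2)
        omega
  -- cardinality of stabilizers
  have hPne : (0:ℚ) ≠ ((Finset.univ.filter (fun pq : Fin (N+2) × Fin (N+2) =>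
      m ≤ (pq.1:ℕ) ∧ m ≤ (pq.2:ℕ) ∧ pq.1 ≠ pq.2)).card : ℚ) := by
    have hmem : (AA N, BB N) ∈ Finset.univ.filter (fun pq : Fin (N+2) × Fin (N+2) =>
        m ≤ (pq.1:ℕ) ∧ m ≤ (pq.2:ℕ) ∧ pq.1 ≠ pq.2) := by
      rw [Finset.mem_filter]
      refine ⟨Finset.mem_univ _, ?_, ?_, AA_ne_BB⟩
      · show m ≤ N; omega
      · show m ≤ N+1; omega
    have := Finset.card_pos.mpr ⟨_, hmem⟩
    exact_mod_cast (Nat.cast_pos.mpr this).ne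
  have hcard : Fintype.card {σ : Equiv.Perm (Fin (N+2)) // ∀ i, lam (σ i) = lam i}
      = ((Finset.univ.filter (fun pq : Fin (N+2) × Fin (N+2) =>
          m ≤ (pq.1:ℕ) ∧ m ≤ (pq.2:ℕ) ∧ pq.1 ≠ pq.2)).card)
        * Fintype.card {σ : Equiv.Perm (Fin N) // ∀ i, lamr (σ i) = lamr i} := by
    rw [Fintype.card_subtype, Fintype.card_subtype]
    have h1 : (Finset.univ.filter fun σ : Equiv.Perm (Fin (N+2)) => ∀ i, lam (σ i) = lam i)
        = Finset.univ.filter (fun σ => ∀ i : Fin (N+2), (i:ℕ) < m → σ i = i) :=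
      Finset.filter_congr (fun σ _ => hstabn σ)
    have h2 : (Finset.univ.filter fun σ : Equiv.Perm (Fin N) => ∀ i, lamr (σ i) = lamr i)
        = Finset.univ.filter (fun σ => ∀ i : Fin N, (i:ℕ) < m → σ i = i) :=
      Finset.filter_congr (fun σ _ => hstabN σ)
    rw [h1, h2, ← Finset.card_product]
    symm
    refine Finset.card_bij (fun z _ => ext z.2 * pp z.1.1 z.1.2) ?_ ?_ ?_
    · rintro ⟨⟨p, q⟩, σb⟩ hz
      rw [Finset.mem_product, Finset.mem_filter, Finset.mem_filter] at hz
      obtain ⟨⟨-, hp, hq, hne⟩, -, hσb⟩ := hz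
      rw [Finset.mem_filter]
      exact ⟨Finset.mem_univ _, (phi_fix_iff hmN p q hp hq σb).mpr hσb⟩
    · rintro ⟨⟨p, q⟩, σb⟩ h1 ⟨⟨p', q'⟩, σb'⟩ h2 he
      rw [Finset.mem_product, Finset.mem_filter] at h1 h2
      obtain ⟨⟨-, hp, hq, hne⟩, -⟩ := h1
      obtain ⟨⟨-, hp', hq', hne'⟩, -⟩ := h2
      obtain ⟨e1, e2, e3⟩ := phi_inj p q p' q' hne hne' σb σb' he
      simp [e1, e2, e3]
    · intro σ hσ
      rw [Finset.mem_filter] at hσ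
      obtain ⟨-, hfix⟩ := hσ
      have hne : σ⁻¹ (AA N) ≠ σ⁻¹ (BB N) := fun h => AA_ne_BB ((Equiv.injective σ⁻¹) h)
      have hpm : m ≤ ((σ⁻¹ (AA N) : Fin (N+2)) : ℕ) := by
        by_contra hc
        have h1 := hfix _ (not_le.mp hc)
        rw [Equiv.Perm.apply_inv_self] at h1
        have h2 := congrArg Fin.val h1
        have h3 : ((AA N : Fin (N+2)) : ℕ) = N := rfl
        omega
      have hqm : m ≤ ((σ⁻¹ (BB N) : Fin (N+2)) : ℕ) := by
        by_contra hc
        have h1 := hfix _ (not_le.mp hc)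
        rw [Equiv.Perm.apply_inv_self] at h1
        have h2 := congrArg Fin.val h1
        have h3 : ((BB N : Fin (N+2)) : ℕ) = N+1 := rfl
        omega
      obtain ⟨σb, hde⟩ := decomp σ
      refine ⟨((σ⁻¹ (AA N), σ⁻¹ (BB N)), σb), ?_, hde.symm⟩
      rw [Finset.mem_product, Finset.mem_filter, Finset.mem_filter]
      refine ⟨⟨Finset.mem_univ _, hpm, hqm, hne⟩, Finset.mem_univ _, ?_⟩
      exact (phi_fix_iff hmN _ _ hpm hqm σb).mp (fun v hv => by rw [← hde]; exact hfix v hv)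
  unfold schurPVal
  rw [hFeq, hFeq', hcard,
    sum_lemma hmN lam lamr hlamr hlamz (embedPt (n := N+2) t y) y t hxA hxB hxy hyt]
  exact coeff_cancel _ _ hPne.symm _

end Main
end SchurAux

set_option maxHeartbeats 2000000 in
/-- Let λ ∈ ℤ₊ⁿ be weakly decreasing with λᵢ = λⱼ (i<j) forcing
λᵢ = 0, and with its two last entries equal to 0 (so λ has at least two zero
entries, which lie at the end).  Let λ̊ ∈ ℤ₊^{n-2} be obtained by removing the
two zeros.  Then the evaluation of p_{λ,n} at x_{n-1} = t, xₙ = -t equals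
p_{λ̊,n-2} in x_1,...,x_{n-2}; in particular it is independent of t.  (Stated
as an identity of the defining rational expressions at all points where the
denominators are nonzero.) -/
theorem schurP_eval (n : ℕ) (hn : 2 ≤ n) (lam : Fin n → ℤ)
    (hpos : ∀ i, 0 ≤ lam i)
    (hdec : ∀ i j : Fin n, i ≤ j → lam j ≤ lam i)
    (hstrict : ∀ i j : Fin n, i < j → lam i = lam j → lam i = 0)
    (hz1 : lam ⟨n - 2, by omega⟩ = 0) (hz2 : lam ⟨n - 1, by omega⟩ = 0) :
    ∀ (t : ℚˣ) (y : Fin (n - 2) → ℚˣ),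
      (∀ i j : Fin n, i ≠ j →
        ((embedPt t y i : ℚ)) ≠ (embedPt t y j : ℚ)) →
      schurPVal n lam (embedPt t y) =
        schurPVal (n - 2) (fun i => lam (Fin.castLE (by omega) i)) y := by
  obtain ⟨N, rfl⟩ : ∃ N, n = N + 2 := ⟨n - 2, by omega⟩
  intro t y hdist
  exact SchurAux.key_thm N lam (fun i => lam (Fin.castLE (by omega) i)) (fun i => rfl)
    hpos hdec hstrict hz1 t y hdist
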